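/- Let X be a strictly convex normed space, T₁ an attracting nonexpansive self-mapping and T₂ a nonexpansive self-mapping of a subset C, having a common fixed point. Then Fix(T₁ ∘ T₂) = Fix(T₂ ∘ T₁) = Fix(T₁) ∩ Fix(T₂). -/
import Mathlib


open Filter Topology

theorem stmt_4
    {X : Type*} [NormedAddCommGroup X] [NormedSpace ℝ X] [StrictConvexSpace ℝ X]
    (C : Set X)
    (T₁ T₂ : X → X) (hT₁C : ∀ x ∈ C, T₁ x ∈ C) (hT₂C : ∀ x ∈ C, T₂ x ∈ C)
    (hT₁ : ∀ x ∈ C, ∀ y ∈ C, ‖T₁ x - T₁ y‖ ≤ ‖x - y‖)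
    (hT₂ : ∀ x ∈ C, ∀ y ∈ C, ‖T₂ x - T₂ y‖ ≤ ‖x - y‖)
    (hattr : ∀ x ∈ C, T₁ x ≠ x → ∀ p ∈ C, T₁ p = p → ‖T₁ x - p‖ < ‖x - p‖)
    (hcommon : ∃ p ∈ C, T₁ p = p ∧ T₂ p = p) :
    {x ∈ C | T₁ (T₂ x) = x} = {x ∈ C | T₂ (T₁ x) = x} ∧
      {x ∈ C | T₁ (T₂ x) = x} = {x ∈ C | T₁ x = x} ∩ {x ∈ C | T₂ x = x} := by
  obtain ⟨p, hpC, hp1, hp2⟩ := hcommon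
  have key12 : ∀ x ∈ C, T₁ (T₂ x) = x → T₁ x = x ∧ T₂ x = x := by
    intro x hxC hx
    have hT₂xC : T₂ x ∈ C := hT₂C x hxC
    have h2 : ‖T₂ x - p‖ ≤ ‖x - p‖ := by
      have := hT₂ x hxC p hpC; rwa [hp2] at this
    have hfix : T₁ (T₂ x) = T₂ x := by
      by_contra hne
      have hlt := hattr (T₂ x) hT₂xC hne p hpC hp1
      rw [hx] at hlt
      exact absurd (lt_of_lt_of_le hlt h2) (lt_irrefl _)
    have h2x : T₂ x = x := hfix ▸ hx
    exact ⟨by rw [← h2x, hfix, h2x], h2x⟩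
  have key21 : ∀ x ∈ C, T₂ (T₁ x) = x → T₁ x = x ∧ T₂ x = x := by
    intro x hxC hx
    have hT₁xC : T₁ x ∈ C := hT₁C x hxC
    have h1x : T₁ x = x := by
      by_contra hne
      have hlt := hattr x hxC hne p hpC hp1
      have h2 : ‖T₂ (T₁ x) - p‖ ≤ ‖T₁ x - p‖ := by
        have := hT₂ (T₁ x) hT₁xC p hpC; rwa [hp2] at this
      rw [hx] at h2
      exact absurd (lt_of_le_of_lt h2 hlt) (lt_irrefl _)
    rw [h1x] at hx
    exact ⟨h1x, hx⟩
  constructor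
  · ext x
    simp only [Set.mem_setOf_eq]
    constructor
    · rintro ⟨hxC, hx⟩
      obtain ⟨h1, h2⟩ := key12 x hxC hx
      exact ⟨hxC, by rw [h1, h2]⟩
    · rintro ⟨hxC, hx⟩
      obtain ⟨h1, h2⟩ := key21 x hxC hx
      exact ⟨hxC, by rw [h2, h1]⟩
  · ext x
    simp only [Set.mem_setOf_eq, Set.mem_inter_iff]
    constructor
    · rintro ⟨hxC, hx⟩
      obtain ⟨h1, h2⟩ := key12 x hxC hx
      exact ⟨⟨hxC, h1⟩, ⟨hxC, h2⟩⟩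
    · rintro ⟨⟨hxC, h1⟩, ⟨_, h2⟩⟩
      exact ⟨hxC, by rw [h2, h1]⟩
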